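/- For every pair (θ, φ) of real numbers with 0 < θ < 1/2 and -1/2 < φ < -1/2 + θ, there exist nonzero complex numbers x, y with 1 + x + y = 0, arg(x) = 2πθ and arg(y) = 2πφ. -/
import Mathlib


open Real

/-- For every `(θ, φ)` with `0 < θ < 1/2` and `-1/2 < φ < -1/2 + θ`, there are nonzero
complex numbers `x, y` with `1 + x + y = 0`, `arg x = 2πθ` and `arg y = 2πφ`. -/
theorem stmt_2 (θ φ : ℝ) (hθ₁ : 0 < θ) (hθ₂ : θ < 1 / 2)
    (hφ₁ : -(1 / 2) < φ) (hφ₂ : φ < -(1 / 2) + θ) :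
    ∃ x y : ℂ, x ≠ 0 ∧ y ≠ 0 ∧ 1 + x + y = 0 ∧
      x.arg = 2 * π * θ ∧ y.arg = 2 * π * φ := by
  have hπ := Real.pi_pos
  set α := 2 * π * θ with hα
  set β := 2 * π * φ with hβ
  have hα0 : 0 < α := by positivity
  have hαπ : α < π := by nlinarith
  have hβ0 : β < 0 := by nlinarith
  have hβπ : -π < β := by nlinarith
  -- β - α ∈ (-2π, -π)
  have hD : 0 < Real.sin (β - α) := by
    have h1 : 0 < β - α + 2 * π := by nlinarith
    have h2 : β - α + 2 * π < π := by nlinarith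
    have := Real.sin_pos_of_pos_of_lt_pi h1 h2
    rwa [Real.sin_add_two_pi] at this
  have hsinα : 0 < Real.sin α := Real.sin_pos_of_pos_of_lt_pi hα0 hαπ
  have hsinβ : Real.sin β < 0 := Real.sin_neg_of_neg_of_neg_pi_lt hβ0 hβπ
  set D := Real.sin (β - α) with hDdef
  have hDne : D ≠ 0 := ne_of_gt hD
  set r : ℝ := -Real.sin β / D with hr
  set s : ℝ := Real.sin α / D with hs
  have hrpos : 0 < r := div_pos (by linarith) hD
  have hspos : 0 < s := div_pos hsinα hD
  refine ⟨(r : ℂ) * (Real.cos α + Real.sin α * Complex.I),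
    (s : ℂ) * (Real.cos β + Real.sin β * Complex.I), ?_, ?_, ?_, ?_, ?_⟩
  · intro h
    rw [mul_eq_zero] at h
    rcases h with h | h
    · exact (ne_of_gt hrpos) (by exact_mod_cast h)
    · have := congrArg Complex.im h
      simp at this
      exact (ne_of_gt hsinα) this
  · intro h
    rw [mul_eq_zero] at h
    rcases h with h | h
    · exact (ne_of_gt hspos) (by exact_mod_cast h)
    · have := congrArg Complex.im h
      simp at this
      exact (ne_of_lt hsinβ) this
  · apply Complex.ext
    · simp only [Complex.add_re, Complex.one_re, Complex.mul_re, Complex.ofReal_re,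
        Complex.ofReal_im, Complex.add_im, Complex.mul_im, Complex.I_re, Complex.I_im,
        Complex.zero_re]
      have hsub : Real.sin (β - α) = Real.sin β * Real.cos α - Real.cos β * Real.sin α :=
        Real.sin_sub β α
      rw [hr, hs]
      field_simp
      nlinarith [hsub]
    · simp only [Complex.add_im, Complex.one_im, Complex.mul_im, Complex.ofReal_re,
        Complex.ofReal_im, Complex.mul_re, Complex.I_re, Complex.I_im, Complex.zero_im]
      rw [hr, hs]
      field_simp
      ring
  · rw [Complex.arg_real_mul _ hrpos, Complex.ofReal_cos, Complex.ofReal_sin]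
    exact Complex.arg_cos_add_sin_mul_I ⟨by linarith, le_of_lt hαπ⟩
  · rw [Complex.arg_real_mul _ hspos, Complex.ofReal_cos, Complex.ofReal_sin]
    exact Complex.arg_cos_add_sin_mul_I ⟨hβπ, by linarith⟩
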